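/- Let q be a prime power, a ∈ F_{q²}*, and α an integer with 0 ≤ α ≤ q-1. Then Σ_{x ∈ F_{q²}} (a·x + x^(3q-2))^(α + (q-1-α)q) = -a^((α+1)(1-q)) · Σ' binom(α,i)·binom(q-1-α,j)·a^(-i-jq), where the sum Σ' runs over pairs (i,j) with 0 ≤ i ≤ α, 0 ≤ j ≤ q-1-α, and -α-1+3(i-j) ≡ 0 (mod q+1). -/

import Mathlib

open Finset

private lemma sum_pow_field_aux {F : Type*} [Field F] [Fintype F] [DecidableEq F]
    (M : ℕ) (hM : M ≠ 0) :
    ∑ x : F, x ^ M = if (Fintype.card F - 1) ∣ M then -1 else 0 := by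
  classical
  let φ : Fˣ ↪ F := ⟨fun x ↦ x, Units.val_injective⟩
  have hmap : univ.map φ = univ \ {0} := by
    ext x
    simpa only [mem_map, mem_univ, Function.Embedding.coeFn_mk, true_and, mem_sdiff,
      mem_singleton, φ] using (show (∃ u : Fˣ, (u : F) = x) ↔ x ≠ 0 from isUnit_iff_ne_zero)
  calc
    ∑ x : F, x ^ M = ∑ x ∈ univ \ {(0 : F)}, x ^ M := by
      rw [← sum_sdiff ({0} : Finset F).subset_univ, sum_singleton, zero_pow hM, add_zero]
    _ = ∑ x : Fˣ, ((x : F) ^ M) := by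
      rw [← hmap, univ.sum_map φ]; rfl
    _ = _ := FiniteField.sum_pow_units F M

theorem power_sum_double_sum_formula
    (q : ℕ) (hq : IsPrimePow q)
    (F : Type*) [Field F] [Fintype F] (hF : Fintype.card F = q ^ 2)
    (a : F) (ha : a ≠ 0)
    (α : ℕ) (hα : α ≤ q - 1) :
    ∑ x : F, (a * x + x ^ (3 * q - 2)) ^ (α + (q - 1 - α) * q) =
      -(a ^ (((α : ℤ) + 1) * (1 - (q : ℤ)))) *
        ∑ i ∈ Finset.range (α + 1), ∑ j ∈ Finset.range (q - 1 - α + 1),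
          if ((q : ℤ) + 1) ∣ (-(α : ℤ) - 1 + 3 * ((i : ℤ) - (j : ℤ))) then
            (Nat.choose α i : F) * (Nat.choose (q - 1 - α) j : F) *
              a ^ (-(i : ℤ) - (j : ℤ) * (q : ℤ))
          else 0 := by
  classical
  have hq2 : 2 ≤ q := hq.two_le
  obtain ⟨p, k, hp, hk, hpk⟩ := hq
  have hpp : p.Prime := hp.nat_prime
  haveI : Fact p.Prime := ⟨hpp⟩
  set β := q - 1 - α with hβ
  -- characteristic
  have hcard : Fintype.card F = p ^ (2 * k) := by
    rw [hF, ← hpk, ← pow_mul, mul_comm]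
  have hrchar : ringChar F = p := by
    have h0 : ((p ^ (2 * k) : ℕ) : F) = 0 := by
      rw [← hcard]; exact FiniteField.cast_card_eq_zero F
    have hdvd : ringChar F ∣ p ^ (2 * k) := ringChar.dvd h0
    have hprime : (ringChar F).Prime := by
      rcases CharP.char_is_prime_or_zero F (ringChar F) with h | h
      · exact h
      · exfalso
        have := CharP.char_ne_zero_of_finite F (ringChar F)
        exact this h
    have : ringChar F ∣ p := hprime.dvd_of_dvd_pow hdvd
    exact ((Nat.prime_dvd_prime_iff_eq hprime hpp).mp this)
  haveI hcharp : CharP F p := hrchar ▸ ringChar.charP F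
  have frob : ∀ x y : F, (x + y) ^ q = x ^ q + y ^ q := by
    intro x y
    rw [← hpk]
    exact add_pow_char_pow x y p k
  -- a ^ (q^2 - 1) = 1
  have ha1 : a ^ (q ^ 2 - 1) = 1 := by
    rw [← hF]; exact FiniteField.pow_card_sub_one_eq_one a ha
  -- exponents
  set e : ℕ → ℕ → ℕ := fun i j => (3 * q - 2) * i + (α - i) + ((3 * q - 2) * (q * j) + (β - j) * q)
    with he
  set c : ℕ → ℕ → F := fun i j =>
    (Nat.choose α i : F) * (Nat.choose β j : F) * a ^ ((α - i) + (β - j) * q) with hc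
  -- key pointwise expansion
  have key : ∀ x : F, (a * x + x ^ (3 * q - 2)) ^ (α + β * q) =
      ∑ i ∈ Finset.range (α + 1), ∑ j ∈ Finset.range (β + 1), c i j * x ^ (e i j) := by
    intro x
    have h1 : (a * x + x ^ (3 * q - 2)) ^ (α + β * q)
        = (x ^ (3 * q - 2) + a * x) ^ α * (x ^ ((3 * q - 2) * q) + a ^ q * x ^ q) ^ β := by
      rw [pow_add, add_comm (a * x), mul_comm β q, pow_mul, frob, mul_pow, ← pow_mul]
    rw [h1, add_pow, add_pow, sum_mul_sum]
    refine Finset.sum_congr rfl fun i _ => Finset.sum_congr rfl fun j _ => ?_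
    simp only [hc, he]
    ring
  -- e i j is never zero
  have hene : ∀ i j, i ≤ α → j ≤ β → e i j ≠ 0 := by
    intro i j hi hj
    simp only [he]
    rcases Nat.eq_zero_or_pos i with rfl | hi'
    · rcases Nat.eq_zero_or_pos j with rfl | hj'
      · simp only [Nat.mul_zero, Nat.sub_zero, Nat.zero_add, Nat.add_zero, Nat.mul_zero]
        rcases Nat.eq_zero_or_pos α with rfl | hα'
        · have hβ2 : β = q - 1 := by omega
          have : 2 ≤ β * q := by
            have h1 : 1 ≤ β := by omega
            calc 2 = 1 * 2 := by norm_num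
            _ ≤ β * q := Nat.mul_le_mul h1 hq2
          omega
        · omega
      · have h4 : 0 < (3 * q - 2) * (q * j) := Nat.mul_pos (by omega) (Nat.mul_pos (by omega) hj')
        omega
    · have h4 : 0 < (3 * q - 2) * i := Nat.mul_pos (by omega) hi'
      omega
  -- divisibility equivalence
  have hDiv : ∀ i j, i ≤ α → j ≤ β →
      ((q ^ 2 - 1 ∣ e i j) ↔ ((q : ℤ) + 1) ∣ (-(α : ℤ) - 1 + 3 * ((i : ℤ) - (j : ℤ)))) := by
    intro i j hi hj
    rw [← Int.natCast_dvd_natCast]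
    have hαq : α ≤ q - 1 := hα
    have h1 : ((q ^ 2 - 1 : ℕ) : ℤ) = ((q : ℤ) - 1) * ((q : ℤ) + 1) := by
      have h1q : 1 ≤ q ^ 2 := by nlinarith
      rw [Nat.cast_sub h1q]
      push_cast
      ring
    have h2 : ((e i j : ℕ) : ℤ) = ((q : ℤ) - 1) * ((q : ℤ) - (α : ℤ) + 3 * i + 3 * q * j) := by
      simp only [he]
      have hβint : ((β : ℕ) : ℤ) = (q : ℤ) - 1 - (α : ℤ) := by
        rw [hβ, Nat.cast_sub hα, Nat.cast_sub (by omega : 1 ≤ q)]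
        push_cast; ring
      push_cast [Nat.cast_sub hi, Nat.cast_sub hj, Nat.cast_sub (show 2 ≤ 3 * q by omega)]
      rw [hβint]
      ring
    rw [h1, h2, mul_dvd_mul_iff_left (show (q : ℤ) - 1 ≠ 0 by
      have : (2 : ℤ) ≤ (q : ℤ) := by exact_mod_cast hq2
      omega)]
    have h3 : (q : ℤ) - (α : ℤ) + 3 * i + 3 * q * j
        = ((q : ℤ) + 1) * (1 + 3 * j) + (-(α : ℤ) - 1 + 3 * ((i : ℤ) - (j : ℤ))) := by ring
    rw [h3, dvd_add_right ⟨1 + 3 * (j : ℤ), rfl⟩]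
  -- power of a identity
  have hApow : ∀ i j, i ≤ α → j ≤ β →
      a ^ ((α - i) + (β - j) * q) =
        a ^ (((α : ℤ) + 1) * (1 - (q : ℤ))) * a ^ (-(i : ℤ) - (j : ℤ) * (q : ℤ)) := by
    intro i j hi hj
    have hm : (((α - i) + (β - j) * q : ℕ) : ℤ) =
        ((α : ℤ) + 1) * (1 - (q : ℤ)) + (-(i : ℤ) - (j : ℤ) * (q : ℤ)) + ((q ^ 2 - 1 : ℕ) : ℤ) := by
      have hβint : ((β : ℕ) : ℤ) = (q : ℤ) - 1 - (α : ℤ) := by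
        rw [hβ, Nat.cast_sub hα, Nat.cast_sub (by omega : 1 ≤ q)]
        push_cast; ring
      have h1q : 1 ≤ q ^ 2 := by nlinarith
      push_cast [Nat.cast_sub hi, Nat.cast_sub hj, Nat.cast_sub h1q]
      rw [hβint]
      ring
    have : a ^ (((α - i) + (β - j) * q : ℕ) : ℤ) =
        a ^ (((α : ℤ) + 1) * (1 - (q : ℤ))) * a ^ (-(i : ℤ) - (j : ℤ) * (q : ℤ))
          * a ^ (((q ^ 2 - 1 : ℕ) : ℤ)) := by
      rw [hm, zpow_add₀ ha, zpow_add₀ ha]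
    rw [zpow_natCast] at this
    rw [this, zpow_natCast, ha1, mul_one]
  -- main computation
  calc
    ∑ x : F, (a * x + x ^ (3 * q - 2)) ^ (α + β * q)
        = ∑ x : F, ∑ i ∈ Finset.range (α + 1), ∑ j ∈ Finset.range (β + 1), c i j * x ^ (e i j) :=
      Finset.sum_congr rfl fun x _ => key x
    _ = ∑ i ∈ Finset.range (α + 1), ∑ j ∈ Finset.range (β + 1), c i j * ∑ x : F, x ^ (e i j) := by
      rw [Finset.sum_comm]
      refine Finset.sum_congr rfl fun i _ => ?_
      rw [Finset.sum_comm]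
      refine Finset.sum_congr rfl fun j _ => ?_
      rw [← Finset.mul_sum]
    _ = ∑ i ∈ Finset.range (α + 1), ∑ j ∈ Finset.range (β + 1),
          -(a ^ (((α : ℤ) + 1) * (1 - (q : ℤ)))) *
            (if ((q : ℤ) + 1) ∣ (-(α : ℤ) - 1 + 3 * ((i : ℤ) - (j : ℤ))) then
              (Nat.choose α i : F) * (Nat.choose β j : F) *
                a ^ (-(i : ℤ) - (j : ℤ) * (q : ℤ))
            else 0) := by
      refine Finset.sum_congr rfl fun i hi => Finset.sum_congr rfl fun j hj => ?_
      have hi' : i ≤ α := Finset.mem_range_succ_iff.mp hi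
      have hj' : j ≤ β := Finset.mem_range_succ_iff.mp hj
      rw [sum_pow_field_aux (e i j) (hene i j hi' hj'), hF]
      by_cases hD : ((q : ℤ) + 1) ∣ (-(α : ℤ) - 1 + 3 * ((i : ℤ) - (j : ℤ)))
      · rw [if_pos ((hDiv i j hi' hj').mpr hD), if_pos hD]
        simp only [hc]
        rw [hApow i j hi' hj']
        ring
      · rw [if_neg (fun h => hD ((hDiv i j hi' hj').mp h)), if_neg hD]
        simp
    _ = -(a ^ (((α : ℤ) + 1) * (1 - (q : ℤ)))) *
        ∑ i ∈ Finset.range (α + 1), ∑ j ∈ Finset.range (β + 1),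
          if ((q : ℤ) + 1) ∣ (-(α : ℤ) - 1 + 3 * ((i : ℤ) - (j : ℤ))) then
            (Nat.choose α i : F) * (Nat.choose β j : F) *
              a ^ (-(i : ℤ) - (j : ℤ) * (q : ℤ))
          else 0 := by
      rw [Finset.mul_sum]
      refine Finset.sum_congr rfl fun i _ => ?_
      rw [Finset.mul_sum]
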